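/- For every positive integer n there is no twice differentiable function x : ℝ → ℝ satisfying x''(t) + n²·x(t) = sin(nt) for all t ∈ [0, π] together with the boundary conditions x(0) = 0 and x(π) = 0. -/

import Mathlib

open Real in
/-- The resonant Dirichlet problem `x'' + n² x = sin(nt)` on `[0, π]`, `x(0) = 0 = x(π)`, has no
twice differentiable solution, for any positive integer `n`. -/
theorem resonant_dirichlet_unsolvable (n : ℕ) (hn : 0 < n) :
    ¬ ∃ x : ℝ → ℝ, Differentiable ℝ x ∧ Differentiable ℝ (deriv x) ∧
        (∀ t ∈ Set.Icc 0 π, deriv (deriv x) t + (n : ℝ) ^ 2 * x t = Real.sin (n * t)) ∧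
        x 0 = 0 ∧ x π = 0 := by
  rintro ⟨x, hx, hx', hode, h0, hπ⟩
  have hn' : (n : ℝ) ≠ 0 := by positivity
  set F : ℝ → ℝ := fun t => deriv x t * Real.sin (n * t) - n * x t * Real.cos (n * t) with hF
  have hsin : ∀ t : ℝ, HasDerivAt (fun t : ℝ => Real.sin (n * t)) (n * Real.cos (n * t)) t := by
    intro t
    simpa [Function.comp_def, mul_comm] using
      (Real.hasDerivAt_sin (n * t)).comp t ((hasDerivAt_id t).const_mul (n : ℝ))
  have hcos : ∀ t : ℝ, HasDerivAt (fun t : ℝ => Real.cos (n * t)) (-(n * Real.sin (n * t))) t := by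
    intro t
    simpa [Function.comp_def, mul_comm] using
      (Real.hasDerivAt_cos (n * t)).comp t ((hasDerivAt_id t).const_mul (n : ℝ))
  have hFT : ∀ t ∈ Set.Icc (0:ℝ) π, HasDerivAt F (Real.sin (n * t) ^ 2) t := by
    intro t ht
    have hxD := (hx t).hasDerivAt
    have hxD' := (hx' t).hasDerivAt
    have h := (hxD'.mul (hsin t)).sub ((hxD.const_mul (n : ℝ)).mul (hcos t))
    refine h.congr_deriv ?_
    have hODE := hode t ht
    linear_combination (Real.sin (n * t)) * hODE
  have hint : IntervalIntegrable (fun t => Real.sin (n * t) ^ 2) MeasureTheory.volume 0 π :=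
    Continuous.intervalIntegrable (by continuity) 0 π
  have e1 : (∫ t in (0:ℝ)..π, Real.sin (n * t) ^ 2) = F π - F 0 :=
    intervalIntegral.integral_eq_sub_of_hasDerivAt
      (fun t ht => hFT t (by simpa [Set.uIcc_of_le Real.pi_pos.le] using ht)) hint
  set G : ℝ → ℝ := fun t => t / 2 - Real.sin (2 * n * t) / (4 * n) with hG
  have hGT : ∀ t ∈ Set.uIcc (0:ℝ) π, HasDerivAt G (Real.sin (n * t) ^ 2) t := by
    intro t _
    have h2 : HasDerivAt (fun t : ℝ => Real.sin (2 * n * t)) (2 * n * Real.cos (2 * n * t)) t := by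
      simpa [Function.comp_def, mul_comm] using
        (Real.hasDerivAt_sin (2 * n * t)).comp t ((hasDerivAt_id t).const_mul (2 * (n : ℝ)))
    have h := ((hasDerivAt_id t).div_const 2).sub (h2.div_const (4 * n))
    refine h.congr_deriv ?_
    have hc : Real.cos (2 * (n : ℝ) * t) = 1 - 2 * Real.sin ((n : ℝ) * t) ^ 2 := by
      rw [show 2 * (n : ℝ) * t = 2 * ((n : ℝ) * t) by ring, Real.cos_two_mul]
      nlinarith [Real.sin_sq_add_cos_sq ((n : ℝ) * t)]
    have hd : 2 * (n : ℝ) * Real.cos (2 * (n : ℝ) * t) / (4 * n)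
        = Real.cos (2 * (n : ℝ) * t) / 2 := by
      field_simp; ring
    simp only [id_eq] at h ⊢
    rw [hd]
    linear_combination (-1/2 : ℝ) * hc
  have e2 : (∫ t in (0:ℝ)..π, Real.sin (n * t) ^ 2) = G π - G 0 :=
    intervalIntegral.integral_eq_sub_of_hasDerivAt hGT hint
  have hsπ : Real.sin ((n : ℝ) * π) = 0 := Real.sin_nat_mul_pi n
  have hs2π : Real.sin (2 * (n : ℝ) * π) = 0 := by
    have := Real.sin_nat_mul_pi (2 * n)
    push_cast at this
    linarith [this]
  have hF0 : F 0 = 0 := by simp [hF, h0]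
  have hFπ : F π = 0 := by simp [hF, hπ, hsπ]
  have hG0 : G 0 = 0 := by simp [hG]
  have hGπ : G π = π / 2 := by simp [hG, hs2π]
  rw [e2, hG0, hGπ] at e1
  rw [hF0, hFπ] at e1
  have := Real.pi_pos
  linarith
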